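/- Combined peak value function for two adjacent rewards in the grid world: let p, q ∈ ℤ × ℤ with Manhattan distance d(p,q) = 1, let r_p ≥ r_s > 0 be real rewards placed at p and q respectively, and let 0 < γ < 1. Define R(x) = r_p if x = p, R(x) = r_s if x = q, and R(x) = 0 otherwise, and define V(x) = γ^{d(x,p)} · r_p/(1 − γ²) + γ^{d(x,q)} · r_s/(1 − γ²). Then V satisfies the Bellman optimality equation of the grid world: for every x ∈ ℤ × ℤ, V(x) = R(x) + γ · max over m ∈ {(1,0), (−1,0), (0,1), (0,−1)} of V(x + m). -/

import Mathlib

/-- The Manhattan distance between two cells of the grid world `ℤ × ℤ`. -/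
def manhattanDist (p q : ℤ × ℤ) : ℕ :=
  (p.1 - q.1).natAbs + (p.2 - q.2).natAbs

/-- The four unit moves of the grid world. -/
def gridMoves : Finset (ℤ × ℤ) :=
  {(1, 0), (-1, 0), (0, 1), (0, -1)}

theorem gridMoves_nonempty : gridMoves.Nonempty := ⟨(1, 0), by decide⟩

lemma mem_gridMoves {m : ℤ × ℤ} :
    m ∈ gridMoves ↔ m = (1,0) ∨ m = (-1,0) ∨ m = (0,1) ∨ m = (0,-1) := by
  simp [gridMoves]

lemma dist_step (m : ℤ × ℤ) (hm : m ∈ gridMoves) (x y : ℤ × ℤ) :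
    manhattanDist x y ≤ manhattanDist (x + m) y + 1 := by
  rcases mem_gridMoves.mp hm with rfl | rfl | rfl | rfl <;>
    simp [manhattanDist, Prod.fst_add, Prod.snd_add] <;> omega

lemma dist_add_self (x m : ℤ × ℤ) (hm : m ∈ gridMoves) :
    manhattanDist (x + m) x = 1 := by
  rcases mem_gridMoves.mp hm with rfl | rfl | rfl | rfl <;>
    simp [manhattanDist, Prod.fst_add, Prod.snd_add] <;> omega

lemma dist_symm (p q : ℤ × ℤ) : manhattanDist p q = manhattanDist q p := by
  simp only [manhattanDist]; omega

lemma sub_mem_gridMoves {p q : ℤ × ℤ} (h : manhattanDist p q = 1) :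
    q - p ∈ gridMoves := by
  simp only [manhattanDist] at h
  rw [mem_gridMoves]
  simp only [Prod.ext_iff, Prod.fst_sub, Prod.snd_sub]
  omega

set_option maxHeartbeats 1000000 in
lemma exists_good (p q x : ℤ × ℤ) (hpq : manhattanDist p q = 1)
    (hxp : x ≠ p) (hxq : x ≠ q) :
    ∃ m ∈ gridMoves, manhattanDist (x + m) p + 1 = manhattanDist x p ∧
      manhattanDist (x + m) q + 1 = manhattanDist x q := by
  have hxp' : x.1 ≠ p.1 ∨ x.2 ≠ p.2 := by
    by_contra h; push_neg at h; exact hxp (Prod.ext h.1 h.2)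
  have hxq' : x.1 ≠ q.1 ∨ x.2 ≠ q.2 := by
    by_contra h; push_neg at h; exact hxq (Prod.ext h.1 h.2)
  simp only [manhattanDist, Prod.fst_add, Prod.snd_add] at hpq ⊢
  have key :
      ((x.1 + 1 - p.1).natAbs + (x.2 - p.2).natAbs + 1
          = (x.1 - p.1).natAbs + (x.2 - p.2).natAbs ∧
        (x.1 + 1 - q.1).natAbs + (x.2 - q.2).natAbs + 1
          = (x.1 - q.1).natAbs + (x.2 - q.2).natAbs) ∨
      ((x.1 - 1 - p.1).natAbs + (x.2 - p.2).natAbs + 1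
          = (x.1 - p.1).natAbs + (x.2 - p.2).natAbs ∧
        (x.1 - 1 - q.1).natAbs + (x.2 - q.2).natAbs + 1
          = (x.1 - q.1).natAbs + (x.2 - q.2).natAbs) ∨
      ((x.1 - p.1).natAbs + (x.2 + 1 - p.2).natAbs + 1
          = (x.1 - p.1).natAbs + (x.2 - p.2).natAbs ∧
        (x.1 - q.1).natAbs + (x.2 + 1 - q.2).natAbs + 1
          = (x.1 - q.1).natAbs + (x.2 - q.2).natAbs) ∨
      ((x.1 - p.1).natAbs + (x.2 - 1 - p.2).natAbs + 1
          = (x.1 - p.1).natAbs + (x.2 - p.2).natAbs ∧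
        (x.1 - q.1).natAbs + (x.2 - 1 - q.2).natAbs + 1
          = (x.1 - q.1).natAbs + (x.2 - q.2).natAbs) := by
    omega
  rcases key with h | h | h | h
  · exact ⟨(1, 0), by decide, by simpa using h⟩
  · exact ⟨(-1, 0), by decide, by simpa [← sub_eq_add_neg] using h⟩
  · exact ⟨(0, 1), by decide, by simpa using h⟩
  · exact ⟨(0, -1), by decide, by simpa [← sub_eq_add_neg] using h⟩

/-- Combined peak value function for two adjacent rewards in the grid world:
with rewards `r_p ≥ r_s > 0` placed at adjacent cells `p` and `q` and
`0 < γ < 1`, the function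
`V x = γ^{d(x,p)} · r_p/(1−γ²) + γ^{d(x,q)} · r_s/(1−γ²)` satisfies the
Bellman optimality equation `V x = R x + γ * max_{m} V (x + m)` of the grid
world, where `R` is `r_p` at `p`, `r_s` at `q` and `0` elsewhere. -/
theorem combined_peak_value_function
    (p q : ℤ × ℤ) (hpq : manhattanDist p q = 1)
    (r_p r_s γ : ℝ) (hr : r_s ≤ r_p) (hrs : 0 < r_s) (hγ0 : 0 < γ) (hγ1 : γ < 1) :
    ∀ x : ℤ × ℤ,
      γ ^ manhattanDist x p * (r_p / (1 - γ ^ 2))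
          + γ ^ manhattanDist x q * (r_s / (1 - γ ^ 2))
        = (if x = p then r_p else if x = q then r_s else 0)
            + γ * gridMoves.sup' gridMoves_nonempty
                (fun m => γ ^ manhattanDist (x + m) p * (r_p / (1 - γ ^ 2))
                  + γ ^ manhattanDist (x + m) q * (r_s / (1 - γ ^ 2))) := by
  intro x
  have hγ2 : (0 : ℝ) < 1 - γ ^ 2 := by nlinarith
  set a : ℝ := r_p / (1 - γ ^ 2) with ha_def
  set b : ℝ := r_s / (1 - γ ^ 2) with hb_def
  have ha : 0 < a := div_pos (lt_of_lt_of_le hrs hr) hγ2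
  have hb : 0 < b := div_pos hrs hγ2
  have hA : a * (1 - γ ^ 2) = r_p := div_mul_cancel₀ _ (ne_of_gt hγ2)
  have hB : b * (1 - γ ^ 2) = r_s := div_mul_cancel₀ _ (ne_of_gt hγ2)
  set f : ℤ × ℤ → ℝ := fun m =>
    γ ^ manhattanDist (x + m) p * a + γ ^ manhattanDist (x + m) q * b with hf
  by_cases hxp : x = p
  · subst hxp
    have hsup : gridMoves.sup' gridMoves_nonempty f = γ * a + b := by
      apply le_antisymm
      · apply Finset.sup'_le
        intro m hm
        have h1 : manhattanDist (x + m) x = 1 := dist_add_self x m hm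
        have h2 : γ ^ manhattanDist (x + m) q ≤ 1 :=
          pow_le_one₀ hγ0.le hγ1.le
        simp only [hf, h1, pow_one]
        nlinarith
      · have hq : q - x ∈ gridMoves := sub_mem_gridMoves hpq
        have hx : x + (q - x) = q := by ring
        have h1 : manhattanDist q x = 1 := (dist_symm q x).trans hpq
        have h2 : manhattanDist q q = 0 := by simp [manhattanDist]
        have hval : f (q - x) = γ * a + b := by
          simp only [hf, hx, h1, h2, pow_one, pow_zero, one_mul]
        exact hval ▸ Finset.le_sup' f hq
    rw [hsup]
    have h0 : manhattanDist x x = 0 := by simp [manhattanDist]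
    rw [h0, hpq, if_pos rfl]
    simp only [pow_zero, pow_one, one_mul]
    linear_combination hA
  · by_cases hxq : x = q
    · subst hxq
      have hqp : manhattanDist x p = 1 := by rw [dist_symm]; exact hpq
      have hsup : gridMoves.sup' gridMoves_nonempty f = a + γ * b := by
        apply le_antisymm
        · apply Finset.sup'_le
          intro m hm
          have h1 : manhattanDist (x + m) x = 1 := dist_add_self x m hm
          have h2 : γ ^ manhattanDist (x + m) p ≤ 1 :=
            pow_le_one₀ hγ0.le hγ1.le
          simp only [hf, h1, pow_one]
          nlinarith
        · have hp : p - x ∈ gridMoves := sub_mem_gridMoves hqp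
          have hx : x + (p - x) = p := by ring
          have h1 : manhattanDist p x = 1 := (dist_symm p x).trans hqp
          have h2 : manhattanDist p p = 0 := by simp [manhattanDist]
          have hval : f (p - x) = a + γ * b := by
            simp only [hf, hx, h1, h2, pow_one, pow_zero, one_mul]
          exact hval ▸ Finset.le_sup' f hp
      rw [hsup]
      have h0 : manhattanDist x x = 0 := by simp [manhattanDist]
      rw [h0, hqp, if_neg hxp, if_pos rfl]
      simp only [pow_zero, pow_one, one_mul]
      linear_combination hB
    · obtain ⟨m0, hm0, hdp, hdq⟩ := exists_good p q x hpq hxp hxq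
      obtain ⟨kp, hkp⟩ : ∃ k, manhattanDist x p = k + 1 := ⟨_, hdp.symm⟩
      obtain ⟨kq, hkq⟩ : ∃ k, manhattanDist x q = k + 1 := ⟨_, hdq.symm⟩
      have hsup : gridMoves.sup' gridMoves_nonempty f = γ ^ kp * a + γ ^ kq * b := by
        apply le_antisymm
        · apply Finset.sup'_le
          intro m hm
          have h1 : kp ≤ manhattanDist (x + m) p := by
            have := dist_step m hm x p; omega
          have h2 : kq ≤ manhattanDist (x + m) q := by
            have := dist_step m hm x q; omega
          have h1' : γ ^ manhattanDist (x + m) p ≤ γ ^ kp :=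
            pow_le_pow_of_le_one hγ0.le hγ1.le h1
          have h2' : γ ^ manhattanDist (x + m) q ≤ γ ^ kq :=
            pow_le_pow_of_le_one hγ0.le hγ1.le h2
          simp only [hf]
          have := mul_le_mul_of_nonneg_right h1' ha.le
          have := mul_le_mul_of_nonneg_right h2' hb.le
          linarith
        · have := Finset.le_sup' f hm0
          have e1 : manhattanDist (x + m0) p = kp := by omega
          have e2 : manhattanDist (x + m0) q = kq := by omega
          have hval : f m0 = γ ^ kp * a + γ ^ kq * b := by
            simp only [hf, e1, e2]
          exact hval ▸ this
      rw [hsup, hkp, hkq, if_neg hxp, if_neg hxq]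
      simp only [pow_succ]
      ring
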